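/- Every permutation w of {1,…,n} has the same shape as its inverse, i.e. α_k(w) = α_k(w⁻¹) for all k; in particular raj(w) = raj(w⁻¹). -/

import Mathlib

open scoped Classical

noncomputable section

namespace RajRegularity

variable {n : ℕ}

/-- Maximal length of an increasing subsequence of `w(i), …, w(n)` beginning with `w(i)`:
the largest cardinality of a set `s` of positions that contains `i`, consists of positions
`≥ i`, and on which `w` is strictly increasing. -/
def lisFrom (w : Equiv.Perm (Fin n)) (i : Fin n) : ℕ :=
  (Finset.univ.filter fun s : Finset (Fin n) =>
      i ∈ s ∧ (∀ j ∈ s, i ≤ j) ∧ ∀ j ∈ s, ∀ k ∈ s, j < k → w j < w k).sup Finset.card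

/-- `rajCode w i = (n − i + 1) −` (maximal length of an increasing subsequence of
`w(i), …, w(n)` beginning with `w(i)`); here positions are 0-based, so the number of
positions `≥ i` is `n - i`. -/
def rajCode (w : Equiv.Perm (Fin n)) (i : Fin n) : ℕ :=
  (n - (i : ℕ)) - lisFrom w i

/-- The Rajchgot index `raj w = Σᵢ rajCode w i`. -/
def raj (w : Equiv.Perm (Fin n)) : ℕ := ∑ i, rajCode w i

/-- The number of inversions of `w`: pairs of positions `i < j` with `w i > w j`. -/
def invNum (w : Equiv.Perm (Fin n)) : ℕ :=
  (Finset.univ.filter fun p : Fin n × Fin n => p.1 < p.2 ∧ w p.2 < w p.1).card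

/-- The `i`-th entry of the inv code: `ℓ_i(w) = #{ j : i < j, w j < w i }`. -/
def ellCode (w : Equiv.Perm (Fin n)) (i : Fin n) : ℕ :=
  (Finset.univ.filter fun j : Fin n => i < j ∧ w j < w i).card

/-- The set of descent positions of `w` (0-based position `j` with `w j > w (j+1)`). -/
def descents (w : Equiv.Perm (Fin n)) : Finset (Fin n) :=
  Finset.univ.filter fun j : Fin n =>
    if h : (j : ℕ) + 1 < n then w ⟨(j : ℕ) + 1, h⟩ < w j else False

/-- The major index: the sum of the (1-based) descent positions of `w`. -/
def maj (w : Equiv.Perm (Fin n)) : ℕ := ∑ j ∈ descents w, ((j : ℕ) + 1)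

/-- `mCode w i`: the number of descents of `w` at positions `≥ i`. -/
def mCode (w : Equiv.Perm (Fin n)) (i : Fin n) : ℕ :=
  ((descents w).filter fun j => i ≤ j).card

/-- `w` is dominant iff it avoids the pattern 132. -/
def Dominant (w : Equiv.Perm (Fin n)) : Prop :=
  ¬ ∃ i j k : Fin n, i < j ∧ j < k ∧ w i < w k ∧ w k < w j

/-- `w` is fireworks iff there are no positions `i < j` with `w j < w (j+1) < w i`. -/
def Fireworks (w : Equiv.Perm (Fin n)) : Prop :=
  ¬ ∃ (i j : Fin n) (h : (j : ℕ) + 1 < n),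
      i < j ∧ w j < w ⟨(j : ℕ) + 1, h⟩ ∧ w ⟨(j : ℕ) + 1, h⟩ < w i

/-- `w` is inverse fireworks iff `w⁻¹` is fireworks. -/
def InvFireworks (w : Equiv.Perm (Fin n)) : Prop := Fireworks w⁻¹

/-- `w` is a valley permutation: for some `a`, it is strictly decreasing on positions `≤ a`
and strictly increasing on positions `≥ a`. -/
def Valley (w : Equiv.Perm (Fin n)) : Prop :=
  ∃ a : ℕ, (∀ i j : Fin n, i < j → (j : ℕ) ≤ a → w j < w i) ∧
    ∀ i j : Fin n, a ≤ (i : ℕ) → i < j → w i < w j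

/-- `eps w i` is the (1-based) blob index `ε_i(w) = i + r_i(w)`. -/
def eps (w : Equiv.Perm (Fin n)) (i : Fin n) : ℕ := (i : ℕ) + 1 + rajCode w i

/-- The shape of `w`: `α_k(w) = #{ i : ε_i(w) = k }` (here `k : Fin n` stands for the
1-based index `k + 1`). -/
def shape (w : Equiv.Perm (Fin n)) : Fin n → ℕ := fun k =>
  (Finset.univ.filter fun i : Fin n => eps w i = (k : ℕ) + 1).card

/-- Dominance order on shapes: `α ⪰ β` iff every tail sum of `α` is at least the
corresponding tail sum of `β`. -/
def Dominates (α β : Fin n → ℕ) : Prop :=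
  ∀ m : Fin n,
    ∑ k ∈ Finset.univ.filter (fun k : Fin n => m ≤ k), β k ≤
      ∑ k ∈ Finset.univ.filter (fun k : Fin n => m ≤ k), α k

/-- Right weak order: `u ≤_R w` iff `w = u * v` length-additively. -/
def leR (u w : Equiv.Perm (Fin n)) : Prop :=
  ∃ v : Equiv.Perm (Fin n), w = u * v ∧ invNum w = invNum u + invNum v

/-- Left weak order: `u ≤_L w` iff `w = v * u` length-additively. -/
def leL (u w : Equiv.Perm (Fin n)) : Prop :=
  ∃ v : Equiv.Perm (Fin n), w = v * u ∧ invNum w = invNum v + invNum u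

/-- Two-sided weak order: the transitive closure of the union of left and right weak
orders (both are reflexive, so we may use the reflexive-transitive closure). -/
def leLR (u w : Equiv.Perm (Fin n)) : Prop :=
  Relation.ReflTransGen (fun a b : Equiv.Perm (Fin n) => leL a b ∨ leR a b) u w

/-- The maximum of the block of the set partition `π(w)` containing the value `v`;
the block of `v` is `{ v' : ε_{w⁻¹ v'}(w) = ε_{w⁻¹ v}(w) }`. -/
def blockMax (w : Equiv.Perm (Fin n)) (v : Fin n) : ℕ :=
  ((Finset.univ.filter fun v' : Fin n => eps w (w⁻¹ v') = eps w (w⁻¹ v)).max'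
      ⟨v, Finset.mem_filter.mpr ⟨Finset.mem_univ v, rfl⟩⟩).val

/-- The fireworks map `Φ`: the one-line word of `Φ w` lists the blocks of `π(w)` in
increasing order of their maxima, each block written in decreasing order.  Equivalently,
`Φ w` sorts the values by the key (max of block, value reversed), lexicographically. -/
def Phi (w : Equiv.Perm (Fin n)) : Equiv.Perm (Fin n) :=
  Tuple.sort fun v : Fin n => n * blockMax w v + (n - 1 - (v : ℕ))

/-- The inverse fireworks map `Φ_inv w = Φ(w⁻¹)⁻¹`. -/
def PhiInv (w : Equiv.Perm (Fin n)) : Equiv.Perm (Fin n) := (Phi w⁻¹)⁻¹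

/-- Partial sums of a sequence of block sizes. -/
def psum (a : ℕ → ℕ) (m : ℕ) : ℕ := ∑ j ∈ Finset.range m, a j

/-- The index of the block (interval `[psum a m, psum a (m+1))`) containing the value `v`. -/
def blockIdx (n : ℕ) (a : ℕ → ℕ) (v : Fin n) : ℕ :=
  ((Finset.range n).filter fun m => psum a (m + 1) ≤ (v : ℕ)).card

/-- The layered permutation with block sizes `a 0, a 1, …`: it reverses each of the
consecutive intervals `[psum a m, psum a (m+1))` of `{0, …, n-1}`.  Equivalently, its
one-line word sorts the values by (block index, value reversed) lexicographically. -/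
def layered (n : ℕ) (a : ℕ → ℕ) : Equiv.Perm (Fin n) :=
  Tuple.sort fun v : Fin n => n * blockIdx n a v + (n - 1 - (v : ℕ))

/-- The layered permutation `e_α` associated to a shape `α : Fin n → ℕ`. -/
def eOf (α : Fin n → ℕ) : Equiv.Perm (Fin n) :=
  layered n fun m => if h : m < n then α ⟨m, h⟩ else 0

lemma lisFrom_le_inv (w : Equiv.Perm (Fin n)) (i : Fin n) :
    lisFrom w i ≤ lisFrom w⁻¹ (w i) := by
  apply Finset.sup_le
  intro s hs
  simp only [Finset.mem_filter, Finset.mem_univ, true_and] at hs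
  obtain ⟨hi, hge, hinc⟩ := hs
  have hcard : (s.image w).card = s.card := Finset.card_image_of_injective s w.injective
  rw [← hcard]
  apply Finset.le_sup
  simp only [Finset.mem_filter, Finset.mem_univ, true_and]
  refine ⟨Finset.mem_image_of_mem w hi, ?_, ?_⟩
  · rintro j hj
    obtain ⟨a, ha, rfl⟩ := Finset.mem_image.mp hj
    rcases eq_or_lt_of_le (hge a ha) with h | h
    · exact le_of_eq (congrArg w h)
    · exact le_of_lt (hinc i hi a ha h)
  · rintro j hj k hk hjk
    obtain ⟨a, ha, rfl⟩ := Finset.mem_image.mp hj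
    obtain ⟨b, hb, rfl⟩ := Finset.mem_image.mp hk
    simp only [Equiv.Perm.inv_def, Equiv.symm_apply_apply]
    by_contra h
    push_neg at h
    rcases lt_or_eq_of_le h with h' | h'
    · exact absurd hjk (not_lt.mpr (hinc b hb a ha h').le)
    · subst h'; exact lt_irrefl _ hjk

lemma lisFrom_inv (w : Equiv.Perm (Fin n)) (i : Fin n) :
    lisFrom w⁻¹ (w i) = lisFrom w i := by
  refine le_antisymm ?_ (lisFrom_le_inv w i)
  have h := lisFrom_le_inv w⁻¹ (w i)
  simpa using h

lemma one_le_lisFrom (w : Equiv.Perm (Fin n)) (i : Fin n) : 1 ≤ lisFrom w i := by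
  have : ({i} : Finset (Fin n)) ∈ Finset.univ.filter fun s : Finset (Fin n) =>
      i ∈ s ∧ (∀ j ∈ s, i ≤ j) ∧ ∀ j ∈ s, ∀ k ∈ s, j < k → w j < w k := by
    simp only [Finset.mem_filter, Finset.mem_univ, true_and, Finset.mem_singleton]
    exact ⟨fun j hj => hj.ge, fun j hj k hk h => absurd h (by rw [hj, hk]; exact lt_irrefl i)⟩
  have h := Finset.le_sup (f := Finset.card) this
  rw [Finset.card_singleton] at h
  exact h

lemma lisFrom_le_sub (w : Equiv.Perm (Fin n)) (i : Fin n) :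
    lisFrom w i ≤ n - (i : ℕ) := by
  apply Finset.sup_le
  intro s hs
  simp only [Finset.mem_filter, Finset.mem_univ, true_and] at hs
  obtain ⟨-, hge, -⟩ := hs
  have hsub : s ⊆ Finset.Ici i := by
    intro j hj; exact Finset.mem_Ici.mpr (hge j hj)
  calc s.card ≤ (Finset.Ici i).card := Finset.card_le_card hsub
    _ = n - (i : ℕ) := by rw [Fin.card_Ici]

lemma eps_eq (w : Equiv.Perm (Fin n)) (i : Fin n) :
    eps w i = n + 1 - lisFrom w i := by
  have h1 := lisFrom_le_sub w i
  have h2 : (i : ℕ) < n := i.isLt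
  have h3 := one_le_lisFrom w i
  unfold eps rajCode
  omega

lemma eps_inv (w : Equiv.Perm (Fin n)) (i : Fin n) :
    eps w⁻¹ (w i) = eps w i := by
  rw [eps_eq, eps_eq, lisFrom_inv]

/-- `w` and `w⁻¹` have the same shape; in particular `raj(w) = raj(w⁻¹)`. -/
theorem shape_inv_eq_and_raj_inv_eq (n : ℕ) (w : Equiv.Perm (Fin n)) :
    (∀ k : Fin n, shape w k = shape w⁻¹ k) ∧ raj w = raj w⁻¹ := by
  constructor
  · intro k
    unfold shape
    apply Finset.card_bij (fun i _ => w i)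
    · intro a ha
      simp only [Finset.mem_filter, Finset.mem_univ, true_and] at ha ⊢
      rw [eps_inv]; exact ha
    · intro a _ b _ h
      exact w.injective h
    · intro b hb
      simp only [Finset.mem_filter, Finset.mem_univ, true_and] at hb ⊢
      exact ⟨w⁻¹ b, by rw [← eps_inv w (w⁻¹ b)]; simpa using hb, by simp⟩
  · have hsum : ∀ u : Equiv.Perm (Fin n),
        ∑ i, eps u i = (∑ i : Fin n, ((i : ℕ) + 1)) + raj u := by
      intro u
      unfold eps raj
      rw [← Finset.sum_add_distrib]
    have heq : ∑ i, eps w i = ∑ i, eps w⁻¹ i := by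
      rw [← Equiv.sum_comp w (fun j => eps w⁻¹ j)]
      exact Finset.sum_congr rfl fun i _ => (eps_inv w i).symm
    have h1 := hsum w
    have h2 := hsum w⁻¹
    omega

end RajRegularity
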